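/- The full existential completion satisfies Frobenius reciprocity along product projections: for a lex primary doctrine P on a finite-limit category C, a projection π : A×B → A, and elements x ∈ P^∃(A×B), y ∈ P^∃(A), one has ∃_π(x ∧ P^∃_π(y)) = ∃_π(x) ∧ y in P^∃(A). -/

import Mathlib

open CategoryTheory CategoryTheory.Limits

universe w v u

structure Doctrine (C : Type u) [Category.{v} C] where
  P : C → Type w
  [instOrd : ∀ A, SemilatticeInf (P A)]
  [instTop : ∀ A, OrderTop (P A)]
  map : ∀ {A B : C}, (A ⟶ B) → P B → P A
  map_id : ∀ (A : C) (x : P A), map (𝟙 A) x = x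
  map_comp : ∀ {A B D : C} (f : A ⟶ B) (g : B ⟶ D) (x : P D),
      map (f ≫ g) x = map f (map g x)
  map_mono : ∀ {A B : C} (f : A ⟶ B), Monotone (map f)
  map_top : ∀ {A B : C} (f : A ⟶ B), map f (⊤ : P B) = ⊤
  map_inf : ∀ {A B : C} (f : A ⟶ B) (x y : P B), map f (x ⊓ y) = map f x ⊓ map f y

attribute [instance] Doctrine.instOrd Doctrine.instTop

variable {C : Type u} [Category.{v} C]

structure Pt (P : Doctrine.{w} C) where
  base : C
  pred : P.P base

structure PtHom (P : Doctrine.{w} C) (X Y : Pt P) where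
  hom : X.base ⟶ Y.base
  cond : X.pred ≤ P.map hom Y.pred

theorem PtHom.ext' {P : Doctrine.{w} C} {X Y : Pt P} {f g : PtHom P X Y}
    (h : f.hom = g.hom) : f = g := by
  cases f; cases g; cases h; rfl

instance Pt.categoryStruct (P : Doctrine.{w} C) : CategoryStruct (Pt P) where
  Hom X Y := PtHom P X Y
  id X := ⟨𝟙 X.base, by rw [P.map_id]⟩
  comp f g := ⟨f.hom ≫ g.hom, by
    rw [P.map_comp]; exact le_trans f.cond (P.map_mono f.hom g.cond)⟩

@[simp] theorem Pt.comp_hom {P : Doctrine.{w} C} {X Y Z : Pt P} (f : X ⟶ Y) (g : Y ⟶ Z) :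
    (f ≫ g).hom = f.hom ≫ g.hom := rfl

@[simp] theorem Pt.id_hom {P : Doctrine.{w} C} (X : Pt P) : (𝟙 X : X ⟶ X).hom = 𝟙 X.base := rfl

instance Pt.category (P : Doctrine.{w} C) : Category (Pt P) where
  id_comp f := PtHom.ext' (by simp)
  comp_id f := PtHom.ext' (by simp)
  assoc f g h := PtHom.ext' (by simp)

structure ExEl (P : Doctrine.{w} C) (A : C) where
  dom : C
  arr : dom ⟶ A
  pred : P.P dom

def ExLe (P : Doctrine.{w} C) {A : C} (x y : ExEl P A) : Prop :=
  ∃ h : x.dom ⟶ y.dom, x.arr = h ≫ y.arr ∧ x.pred ≤ P.map h y.pred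

def ExEl.top (P : Doctrine.{w} C) (A : C) : ExEl P A := ⟨A, 𝟙 A, ⊤⟩

def ExEl.push {P : Doctrine.{w} C} {A B : C} (x : ExEl P A) (w : A ⟶ B) : ExEl P B :=
  ⟨x.dom, x.arr ≫ w, x.pred⟩

noncomputable def ExEl.meet [HasPullbacks C] {P : Doctrine.{w} C} {A : C} (x y : ExEl P A) : ExEl P A :=
  ⟨pullback x.arr y.arr, pullback.fst x.arr y.arr ≫ x.arr,
    P.map (pullback.fst x.arr y.arr) x.pred ⊓ P.map (pullback.snd x.arr y.arr) y.pred⟩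

noncomputable def Doctrine.reind [HasPullbacks C] (P : Doctrine.{w} C) {A A' : C} (u : A' ⟶ A)
    (y : ExEl P A) : ExEl P A' :=
  ⟨pullback u y.arr, pullback.fst u y.arr, P.map (pullback.snd u y.arr) y.pred⟩

/-- Frobenius reciprocity for the full existential completion along a
product projection `π : A ⨯ B ⟶ A`:  `∃_π(x ⊓ P^∃_π(y)) = ∃_π(x) ⊓ y` in `P^∃(A)`
(equality in the poset reflection, i.e. mutual inequality in the preorder). -/
theorem fullExCompletion_frobenius [HasFiniteLimits C]
    (P : Doctrine.{w} C) (A B : C) (x : ExEl P (A ⨯ B)) (y : ExEl P A) :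
    ExLe P ((x.meet (P.reind (prod.fst : A ⨯ B ⟶ A) y)).push (prod.fst : A ⨯ B ⟶ A))
      ((x.push (prod.fst : A ⨯ B ⟶ A)).meet y) ∧
    ExLe P ((x.push (prod.fst : A ⨯ B ⟶ A)).meet y)
      ((x.meet (P.reind (prod.fst : A ⨯ B ⟶ A) y)).push (prod.fst : A ⨯ B ⟶ A)) := by

  classical
  set π : A ⨯ B ⟶ A := prod.fst
  obtain ⟨X, f, α⟩ := x
  obtain ⟨Y, g, β⟩ := y
  -- reind π y has arrow q : pullback π g ⟶ A ⨯ B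
  constructor
  · -- LHS ≤ RHS
    refine ⟨pullback.lift (pullback.fst f (pullback.fst π g))
        (pullback.snd f (pullback.fst π g) ≫ pullback.snd π g) ?_, ?_, ?_⟩
    · show pullback.fst f (pullback.fst π g) ≫ f ≫ π = _ ≫ g
      rw [← Category.assoc, pullback.condition, Category.assoc,
        pullback.condition]; exact (Category.assoc _ _ _).symm
    · simp [ExEl.push, ExEl.meet, Doctrine.reind, Category.assoc]
      exact (pullback.lift_fst_assoc ..).symm
    · simp only [ExEl.push, ExEl.meet, Doctrine.reind, P.map_inf, ← P.map_comp,
        pullback.lift_fst, pullback.lift_snd]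
      erw [pullback.lift_fst, pullback.lift_snd]
      rfl
  · -- RHS ≤ LHS
    have hm : (pullback.fst (f ≫ π) g ≫ f) ≫ π = pullback.snd (f ≫ π) g ≫ g := by
      rw [Category.assoc, pullback.condition]
    refine ⟨pullback.lift (pullback.fst (f ≫ π) g)
        (pullback.lift (pullback.fst (f ≫ π) g ≫ f) (pullback.snd (f ≫ π) g) hm)
        (by simp [Doctrine.reind]; exact (pullback.lift_fst _ _ hm).symm), ?_, ?_⟩
    · simp [ExEl.push, ExEl.meet, Doctrine.reind, Category.assoc]
      exact (pullback.lift_fst_assoc ..).symm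
    · simp only [ExEl.push, ExEl.meet, Doctrine.reind, P.map_inf, ← P.map_comp,
        pullback.lift_fst, pullback.lift_snd, Category.assoc]
      erw [pullback.lift_fst, pullback.lift_snd_assoc, pullback.lift_snd]
      rfl
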